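/- Let V be a distribution on ℝ with tail V̄(x) ∼ e^{−αx} f(x) for some α > 0, where f = l∘exp with l slowly varying and f locally bounded. Then ∫₀^∞ e^{αy} V(dy) = ∞ if and only if ∫₀^∞ f(y) dy = ∞. -/

import Mathlib

open Filter MeasureTheory Asymptotics

open scoped ENNReal

lemma aux_top (G H : ℝ → ℝ≥0∞) (A : ℝ) (hA : 0 ≤ A) (c : ℝ≥0∞) (hc : c ≠ ⊤)
    (hle : ∀ s, A < s → G s ≤ c * H s)
    (hGfin : ∫⁻ s in Set.Ioc 0 A, G s ≠ ⊤)
    (hG : ∫⁻ s in Set.Ioi 0, G s = ⊤) : ∫⁻ s in Set.Ioi 0, H s = ⊤ := by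
  have hsplit : (Set.Ioi (0:ℝ)) = Set.Ioc 0 A ∪ Set.Ioi A := (Set.Ioc_union_Ioi_eq_Ioi hA).symm
  have h1 : ∫⁻ s in Set.Ioi (0:ℝ), G s
      = (∫⁻ s in Set.Ioc 0 A, G s) + ∫⁻ s in Set.Ioi A, G s := by
    rw [hsplit, Measure.restrict_union (Set.Ioc_disjoint_Ioi le_rfl) measurableSet_Ioi,
      lintegral_add_measure]
  have h2 : ∫⁻ s in Set.Ioi A, G s = ⊤ := by
    rw [h1] at hG
    rcases ENNReal.add_eq_top.1 hG with h | h
    · exact absurd h hGfin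
    · exact h
  have h3 : (⊤ : ℝ≥0∞) ≤ c * ∫⁻ s in Set.Ioi A, H s := by
    calc (⊤ : ℝ≥0∞) = ∫⁻ s in Set.Ioi A, G s := h2.symm
    _ ≤ ∫⁻ s in Set.Ioi A, c * H s := by
        refine lintegral_mono_ae ((ae_restrict_iff' measurableSet_Ioi).2 ?_)
        exact Eventually.of_forall fun s hs => hle s hs
    _ = c * ∫⁻ s in Set.Ioi A, H s := lintegral_const_mul' c H hc
  have h4 : ∫⁻ s in Set.Ioi A, H s = ⊤ := by
    by_contra hne
    exact (ENNReal.mul_lt_top hc.lt_top (lt_top_iff_ne_top.2 hne)).ne (top_le_iff.1 h3)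
  refine top_le_iff.1 ?_
  calc (⊤ : ℝ≥0∞) = ∫⁻ s in Set.Ioi A, H s := h4.symm
  _ ≤ ∫⁻ s in Set.Ioi 0, H s :=
      lintegral_mono' (Measure.restrict_mono (Set.Ioi_subset_Ioi hA) le_rfl) le_rfl

/-- For a distribution `V` on `ℝ` with tail `V̄(x) ∼ e^{-αx} f(x)`, `α > 0`,
`f = l ∘ exp` with `l` slowly varying and `f` locally bounded:
`∫₀^∞ e^{αy} V(dy) = ∞` iff `∫₀^∞ f(y) dy = ∞`. -/
theorem exp_moment_infinite_iff (μ : Measure ℝ) [IsProbabilityMeasure μ]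
    (α : ℝ) (hα : 0 < α) (f l : ℝ → ℝ)
    (hl : ∀ t : ℝ, 0 < t → Tendsto (fun x => l (x * t) / l x) atTop (nhds 1))
    (hf : ∀ x, f x = l (Real.exp x))
    (hfnn : ∀ x, 0 ≤ f x)
    (hlb : ∀ r : ℝ, ∃ C : ℝ, ∀ x ∈ Set.Icc (0:ℝ) r, f x ≤ C)
    (htail : (fun x => (μ (Set.Ioi x)).toReal) ~[atTop]
      (fun x => Real.exp (-α * x) * f x)) :
    (∫⁻ y in Set.Ioi (0:ℝ), ENNReal.ofReal (Real.exp (α * y)) ∂μ = ⊤) ↔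
    (∫⁻ y in Set.Ioi (0:ℝ), ENNReal.ofReal (f y) = ⊤) := by
  have hαne : α ≠ 0 := hα.ne'
  set T : ℝ → ℝ≥0∞ := fun t => μ (Set.Ioi (max (Real.log t / α) 0)) with hT
  set G : ℝ → ℝ≥0∞ := fun x => ENNReal.ofReal (Real.exp (α * x) * α) * μ (Set.Ioi x) with hGdef
  set H : ℝ → ℝ≥0∞ := fun x => ENNReal.ofReal (f x) with hHdef
  -- Step 1 : layer cake
  have hlc : (∫⁻ y in Set.Ioi (0:ℝ), ENNReal.ofReal (Real.exp (α * y)) ∂μ)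
      = ∫⁻ t in Set.Ioi (0:ℝ), (μ.restrict (Set.Ioi (0:ℝ))) {y | t < Real.exp (α * y)} :=
    lintegral_eq_lintegral_meas_lt _ (Eventually.of_forall fun y => (Real.exp_pos _).le)
      (Real.measurable_exp.comp (measurable_const_mul α)).aemeasurable
  -- Step 2 : identify the sets
  have hJ : ∫⁻ t in Set.Ioi (0:ℝ), (μ.restrict (Set.Ioi (0:ℝ))) {y | t < Real.exp (α * y)}
      = ∫⁻ t in Set.Ioi (0:ℝ), T t := by
    refine setLIntegral_congr_fun measurableSet_Ioi (fun t ht => ?_)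
    have hset : {y : ℝ | t < Real.exp (α * y)} = Set.Ioi (Real.log t / α) := by
      ext y
      simp only [Set.mem_setOf_eq, Set.mem_Ioi]
      rw [← Real.log_lt_iff_lt_exp ht, ← div_lt_iff₀' hα]
    rw [hset, Measure.restrict_apply measurableSet_Ioi, Set.Ioi_inter_Ioi]
  -- Step 3 : split at 1
  have hsplit1 : ∫⁻ t in Set.Ioi (0:ℝ), T t
      = (∫⁻ t in Set.Ioc (0:ℝ) 1, T t) + ∫⁻ t in Set.Ioi (1:ℝ), T t := by
    rw [← Set.Ioc_union_Ioi_eq_Ioi (zero_le_one (α := ℝ)),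
      Measure.restrict_union (Set.Ioc_disjoint_Ioi le_rfl) measurableSet_Ioi,
      lintegral_add_measure]
  have hlow : ∫⁻ t in Set.Ioc (0:ℝ) 1, T t ≠ ⊤ := by
    have hle1 : ∫⁻ t in Set.Ioc (0:ℝ) 1, T t ≤ ∫⁻ _ in Set.Ioc (0:ℝ) 1, (1:ℝ≥0∞) :=
      lintegral_mono fun t => prob_le_one
    refine ne_top_of_le_ne_top ?_ hle1
    rw [setLIntegral_const]
    simp [Real.volume_Ioc]
  -- Step 4 : on (1,∞) the max is the log term; change variables
  have hhi : ∫⁻ t in Set.Ioi (1:ℝ), T t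
      = ∫⁻ t in Set.Ioi (1:ℝ), μ (Set.Ioi (Real.log t / α)) := by
    refine setLIntegral_congr_fun measurableSet_Ioi (fun t ht => ?_)
    have : max (Real.log t / α) 0 = Real.log t / α :=
      max_eq_left (le_of_lt (div_pos (Real.log_pos ht) hα))
    simp only [hT, this]
  have himg : (fun s => Real.exp (α * s)) '' Set.Ioi 0 = Set.Ioi (1:ℝ) := by
    ext t
    constructor
    · rintro ⟨s, hs, rfl⟩
      have h0 : (0:ℝ) < α * s := mul_pos hα hs
      have : Real.exp 0 < Real.exp (α * s) := Real.exp_lt_exp.2 h0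
      simpa [Real.exp_zero] using this
    · intro ht
      refine ⟨Real.log t / α, div_pos (Real.log_pos ht) hα, ?_⟩
      show Real.exp (α * (Real.log t / α)) = t
      have h1 : α * (Real.log t / α) = Real.log t := by field_simp
      rw [h1, Real.exp_log (lt_trans zero_lt_one ht)]
  have hderiv : ∀ x ∈ Set.Ioi (0:ℝ), HasDerivWithinAt (fun s => Real.exp (α * s))
      (Real.exp (α * x) * α) (Set.Ioi 0) x := by
    intro x _
    have h1 : HasDerivAt (fun s : ℝ => α * s) α x := by
      simpa using (hasDerivAt_id x).const_mul α
    exact h1.exp.hasDerivWithinAt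
  have hinj : Set.InjOn (fun s => Real.exp (α * s)) (Set.Ioi 0) := fun a _ b _ h =>
    mul_left_cancel₀ hαne (Real.exp_injective h)
  have hCoV := lintegral_image_eq_lintegral_abs_det_fderiv_mul volume measurableSet_Ioi
      (fun x hx => (hderiv x hx).hasFDerivWithinAt) hinj (fun t => μ (Set.Ioi (Real.log t / α)))
  simp only [ContinuousLinearMap.det_toSpanSingleton] at hCoV
  rw [himg] at hCoV
  have hG3 : ∫⁻ x in Set.Ioi (0:ℝ),
      ENNReal.ofReal |Real.exp (α * x) * α| * μ (Set.Ioi (Real.log (Real.exp (α * x)) / α))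
      = ∫⁻ x in Set.Ioi (0:ℝ), G x := by
    refine setLIntegral_congr_fun measurableSet_Ioi (fun x hx => ?_)
    have h1 : α * x / α = x := by field_simp
    rw [Real.log_exp, h1, abs_of_nonneg (by positivity)]
  -- assemble: LHS = ⊤ ↔ ∫ G = ⊤
  have hmain : (∫⁻ y in Set.Ioi (0:ℝ), ENNReal.ofReal (Real.exp (α * y)) ∂μ = ⊤)
      ↔ (∫⁻ x in Set.Ioi (0:ℝ), G x = ⊤) := by
    rw [hlc, hJ, hsplit1, hhi, hCoV, hG3, ENNReal.add_eq_top]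
    simp [hlow]
  rw [hmain]
  -- Step 5 : comparison of G with H via the tail equivalence
  have hev : ∀ᶠ x in atTop,
      ‖(μ (Set.Ioi x)).toReal - Real.exp (-α * x) * f x‖
        ≤ (1/2) * ‖Real.exp (-α * x) * f x‖ := htail.isLittleO.def (by norm_num)
  obtain ⟨a, ha⟩ := Filter.eventually_atTop.1 hev
  set A : ℝ := max a 1 with hAdef
  have hA0 : (0:ℝ) ≤ A := le_trans zero_le_one (le_max_right a 1)
  have hbounds : ∀ s, A < s →
      Real.exp (α * s) * α * (μ (Set.Ioi s)).toReal ≤ (3/2) * α * f s ∧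
      f s ≤ (2/α) * (Real.exp (α * s) * α * (μ (Set.Ioi s)).toReal) := by
    intro s hs
    have hsa : a ≤ s := le_of_lt (lt_of_le_of_lt (le_max_left a 1) hs)
    have h1 := ha s hsa
    have hvnn : 0 ≤ Real.exp (-α * s) * f s := mul_nonneg (Real.exp_pos _).le (hfnn s)
    rw [Real.norm_eq_abs, Real.norm_eq_abs, abs_of_nonneg hvnn] at h1
    obtain ⟨hl2, hr2⟩ := abs_le.1 h1
    have hepos : (0:ℝ) < Real.exp (α * s) := Real.exp_pos _
    have hkey : Real.exp (α * s) * (Real.exp (-α * s) * f s) = f s := by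
      rw [neg_mul, Real.exp_neg, ← mul_assoc, mul_inv_cancel₀ (Real.exp_ne_zero _), one_mul]
    have hup : (μ (Set.Ioi s)).toReal ≤ (3/2) * (Real.exp (-α * s) * f s) := by linarith
    have hdown : Real.exp (-α * s) * f s ≤ 2 * (μ (Set.Ioi s)).toReal := by linarith
    constructor
    · have h3 : Real.exp (α * s) * (μ (Set.Ioi s)).toReal ≤ (3/2) * f s := by
        calc Real.exp (α * s) * (μ (Set.Ioi s)).toReal
            ≤ Real.exp (α * s) * ((3/2) * (Real.exp (-α * s) * f s)) :=
              mul_le_mul_of_nonneg_left hup hepos.le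
        _ = (3/2) * (Real.exp (α * s) * (Real.exp (-α * s) * f s)) := by ring
        _ = (3/2) * f s := by rw [hkey]
      calc Real.exp (α * s) * α * (μ (Set.Ioi s)).toReal
          = α * (Real.exp (α * s) * (μ (Set.Ioi s)).toReal) := by ring
      _ ≤ α * ((3/2) * f s) := mul_le_mul_of_nonneg_left h3 hα.le
      _ = (3/2) * α * f s := by ring
    · calc f s = Real.exp (α * s) * (Real.exp (-α * s) * f s) := hkey.symm
      _ ≤ Real.exp (α * s) * (2 * (μ (Set.Ioi s)).toReal) :=
          mul_le_mul_of_nonneg_left hdown hepos.le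
      _ = (2/α) * (Real.exp (α * s) * α * (μ (Set.Ioi s)).toReal) := by field_simp
  have hGof : ∀ s : ℝ, G s = ENNReal.ofReal (Real.exp (α * s) * α * (μ (Set.Ioi s)).toReal) := by
    intro s
    rw [ENNReal.ofReal_mul (by positivity), ENNReal.ofReal_toReal (measure_ne_top μ _)]
  -- eventual domination both ways
  have hle1 : ∀ s, A < s → G s ≤ ENNReal.ofReal ((3/2) * α) * H s := by
    intro s hs
    rw [hGof s, hHdef, ← ENNReal.ofReal_mul (by positivity)]
    exact ENNReal.ofReal_le_ofReal (hbounds s hs).1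
  have hle2 : ∀ s, A < s → H s ≤ ENNReal.ofReal (2/α) * G s := by
    intro s hs
    rw [hGof s, hHdef, ← ENNReal.ofReal_mul (by positivity)]
    exact ENNReal.ofReal_le_ofReal (hbounds s hs).2
  -- finiteness on (0, A]
  have hGfin : ∫⁻ s in Set.Ioc (0:ℝ) A, G s ≠ ⊤ := by
    have hle : ∫⁻ s in Set.Ioc (0:ℝ) A, G s
        ≤ ∫⁻ _ in Set.Ioc (0:ℝ) A, ENNReal.ofReal (Real.exp (α * A) * α) := by
      refine lintegral_mono_ae ((ae_restrict_iff' measurableSet_Ioc).2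
        (Filter.Eventually.of_forall fun s hs => ?_))
      calc G s ≤ ENNReal.ofReal (Real.exp (α * s) * α) * 1 := mul_le_mul_right prob_le_one _
      _ ≤ ENNReal.ofReal (Real.exp (α * A) * α) := by
          rw [mul_one]
          exact ENNReal.ofReal_le_ofReal (mul_le_mul_of_nonneg_right
            (Real.exp_le_exp.2 (mul_le_mul_of_nonneg_left hs.2 hα.le)) hα.le)
    refine ne_top_of_le_ne_top ?_ hle
    rw [setLIntegral_const]
    exact ENNReal.mul_ne_top ENNReal.ofReal_ne_top (measure_Ioc_lt_top).ne
  have hHfin : ∫⁻ s in Set.Ioc (0:ℝ) A, H s ≠ ⊤ := by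
    obtain ⟨C, hC⟩ := hlb A
    have hle : ∫⁻ s in Set.Ioc (0:ℝ) A, H s
        ≤ ∫⁻ _ in Set.Ioc (0:ℝ) A, ENNReal.ofReal C := by
      refine lintegral_mono_ae ((ae_restrict_iff' measurableSet_Ioc).2
        (Filter.Eventually.of_forall fun s hs => ?_))
      exact ENNReal.ofReal_le_ofReal (hC s ⟨hs.1.le, hs.2⟩)
    refine ne_top_of_le_ne_top ?_ hle
    rw [setLIntegral_const]
    exact ENNReal.mul_ne_top ENNReal.ofReal_ne_top (measure_Ioc_lt_top).ne
  constructor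
  · intro h
    exact aux_top G H A hA0 _ ENNReal.ofReal_ne_top hle1 hGfin h
  · intro h
    exact aux_top H G A hA0 _ ENNReal.ofReal_ne_top hle2 hHfin h
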